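/- Let G be a group, I a set, (H_i)_{i∈I} subgroups of G and ρ_i : H_i → G group homomorphisms, and let M be the associated monoid HNN-extension ⟨G, t_i (i ∈ I) | relations of G, h t_i = t_i ρ_i(h) for all h ∈ H_i⟩. Then M is a left Rees monoid: M is left cancellative, right rigid, and every principal right ideal of M is contained in only finitely many distinct principal right ideals. -/

import Mathlib

universe u v

/-- The principal right ideal `aM` of a monoid. -/
def prIdeal {M : Type*} [Monoid M] (a : M) : Set M := Set.range fun m => a * m

/-- A left Rees monoid: a left cancellative, right rigid monoid in which every principal
right ideal is contained in only finitely many distinct principal right ideals. -/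
def IsLeftReesMonoid (M : Type*) [Monoid M] : Prop :=
  (∀ a b c : M, a * b = a * c → b = c) ∧
  (∀ a b : M, (prIdeal a ∩ prIdeal b).Nonempty →
    prIdeal a ⊆ prIdeal b ∨ prIdeal b ⊆ prIdeal a) ∧
  (∀ a : M, {S : Set M | (∃ b : M, S = prIdeal b) ∧ prIdeal a ⊆ S}.Finite)

/-- The defining relations of the monoid HNN-extension
`⟨G, tᵢ (i ∈ I) | relations of G, h tᵢ = tᵢ ρᵢ(h) for h ∈ Hᵢ⟩`. -/
inductive HNNRel (G : Type u) [Group G] {I : Type v} (H : I → Subgroup G)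
    (ρ : ∀ i, H i →* G) : FreeMonoid (G ⊕ I) → FreeMonoid (G ⊕ I) → Prop
  | mul (g h : G) : HNNRel G H ρ
      (FreeMonoid.of (Sum.inl g) * FreeMonoid.of (Sum.inl h))
      (FreeMonoid.of (Sum.inl (g * h)))
  | one : HNNRel G H ρ (FreeMonoid.of (Sum.inl (1 : G))) 1
  | hnn (i : I) (h : H i) : HNNRel G H ρ
      (FreeMonoid.of (Sum.inl (h : G)) * FreeMonoid.of (Sum.inr i))
      (FreeMonoid.of (Sum.inr i) * FreeMonoid.of (Sum.inl (ρ i h)))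

/-- The monoid HNN-extension of `G` with associated subgroups `Hᵢ`, homomorphisms `ρᵢ`
and stable letters `tᵢ`. -/
abbrev HNNMonoid (G : Type u) [Group G] {I : Type v} (H : I → Subgroup G)
    (ρ : ∀ i, H i →* G) :=
  (conGen (HNNRel G H ρ)).Quotient

section NF
variable {G : Type u} [Group G] {I : Type v} (H : I → Subgroup G) (ρ : ∀ i, H i →* G)

/-- carry element: the element of `H i` produced by pushing `g` past a coset letter `c`. -/
noncomputable def hel (g : G) (i : I) (c : G ⧸ H i) : H i :=
  ⟨(Quotient.out (g • c))⁻¹ * (g * Quotient.out c), by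
    rw [← QuotientGroup.eq, QuotientGroup.out_eq']
    have h2 : (QuotientGroup.mk (g * Quotient.out c) : G ⧸ H i)
        = g • QuotientGroup.mk (Quotient.out c) := rfl
    rw [h2, QuotientGroup.out_eq']⟩

lemma hel_val (g : G) (i : I) (c : G ⧸ H i) :
    (Quotient.out (g • c)) * (hel H g i c : G) = g * Quotient.out c := by
  simp [hel]

noncomputable def push : List (Σ i : I, G ⧸ H i) → G → List (Σ i : I, G ⧸ H i) × G
  | [], g => ([], g)
  | ⟨i, c⟩ :: ys, g =>
    (⟨i, g • c⟩ :: (push ys (ρ i (hel H g i c))).1, (push ys (ρ i (hel H g i c))).2)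

lemma push_nil (g : G) : push H ρ [] g = ([], g) := rfl

lemma push_cons (g : G) (i : I) (c : G ⧸ H i) (ys : List (Σ i : I, G ⧸ H i)) :
    push H ρ (⟨i, c⟩ :: ys) g =
      (⟨i, g • c⟩ :: (push H ρ ys (ρ i (hel H g i c))).1,
        (push H ρ ys (ρ i (hel H g i c))).2) := rfl

lemma hel_one (i : I) (c : G ⧸ H i) : hel H (1 : G) i c = 1 := by
  apply Subtype.ext; simp [hel]

lemma push_one : ∀ ys : List (Σ i : I, G ⧸ H i), push H ρ ys 1 = (ys, 1)
  | [] => rfl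
  | ⟨i, c⟩ :: ys => by
    rw [push_cons, hel_one, map_one, push_one ys, one_smul]

lemma hel_mul (a b : G) (i : I) (c : G ⧸ H i) :
    hel H (a * b) i c = hel H a i (b • c) * hel H b i c := by
  apply Subtype.ext
  push_cast [hel, mul_smul]
  group

lemma push_mul : ∀ (ys : List (Σ i : I, G ⧸ H i)) (a b : G),
    push H ρ ys (a * b) =
      ((push H ρ (push H ρ ys b).1 a).1,
        (push H ρ (push H ρ ys b).1 a).2 * (push H ρ ys b).2)
  | [], _, _ => rfl
  | ⟨i, c⟩ :: ys, a, b => by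
    rw [push_cons, hel_mul, map_mul, push_mul ys, push_cons, push_cons, mul_smul]

lemma push_append : ∀ (ys : List (Σ i : I, G ⧸ H i)) (g : G)
      (zs : List (Σ i : I, G ⧸ H i)),
    push H ρ (ys ++ zs) g =
      ((push H ρ ys g).1 ++ (push H ρ zs (push H ρ ys g).2).1,
        (push H ρ zs (push H ρ ys g).2).2)
  | [], _, zs => rfl
  | ⟨i, c⟩ :: ys, g, zs => by
    rw [List.cons_append, push_cons, push_append ys _ zs, push_cons]
    simp

lemma push_push_fst (g : G) (ys : List (Σ i : I, G ⧸ H i)) :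
    (push H ρ (push H ρ ys g).1 g⁻¹).1 = ys := by
  have := push_mul H ρ ys g⁻¹ g
  rw [inv_mul_cancel, push_one] at this
  exact (congrArg Prod.fst this).symm


/-- Normal form monoid: a list of coset letters and a final group element. -/
def NFc (_ρ : ∀ i, H i →* G) : Type (max u v) := List (Σ i : I, G ⧸ H i) × G

noncomputable instance : Monoid (NFc H ρ) where
  mul a b := (a.1 ++ (push H ρ b.1 a.2).1, (push H ρ b.1 a.2).2 * b.2)
  one := (([], 1) : List (Σ i : I, G ⧸ H i) × G)
  mul_assoc a b c := by
    show (a.1 ++ (push H ρ b.1 a.2).1 ++ (push H ρ c.1 ((push H ρ b.1 a.2).2 * b.2)).1,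
          (push H ρ c.1 ((push H ρ b.1 a.2).2 * b.2)).2 * c.2)
        = (a.1 ++ (push H ρ (b.1 ++ (push H ρ c.1 b.2).1) a.2).1,
          (push H ρ (b.1 ++ (push H ρ c.1 b.2).1) a.2).2 * ((push H ρ c.1 b.2).2 * c.2))
    rw [push_mul, push_append]
    exact Prod.ext (by simp) (by simp [mul_assoc])
  one_mul a := by
    show (([] : List (Σ i : I, G ⧸ H i)) ++ (push H ρ a.1 1).1, (push H ρ a.1 1).2 * a.2) = a
    rw [push_one]; simp; rfl
  mul_one a := by
    show (a.1 ++ (push H ρ [] a.2).1, (push H ρ [] a.2).2 * 1) = a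
    rw [push_nil]; simp; rfl

lemma NFc.mul_def (a b : NFc H ρ) :
    a * b = (a.1 ++ (push H ρ b.1 a.2).1, (push H ρ b.1 a.2).2 * b.2) := rfl

lemma NFc.one_def : (1 : NFc H ρ) = (([], 1) : List (Σ i : I, G ⧸ H i) × G) := rfl

lemma NFc.mem_prIdeal {a z : NFc H ρ} : z ∈ prIdeal a ↔ a.1 <+: z.1 := by
  constructor
  · rintro ⟨m, rfl⟩
    exact ⟨_, rfl⟩
  · rintro ⟨ws, hw⟩
    refine ⟨((push H ρ ws a.2⁻¹).1, ((push H ρ (push H ρ ws a.2⁻¹).1 a.2).2)⁻¹ * z.2), ?_⟩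
    have h1 : (push H ρ (push H ρ ws a.2⁻¹).1 a.2).1 = ws := by
      have := push_mul H ρ ws a.2 a.2⁻¹
      rw [mul_inv_cancel, push_one] at this
      exact (congrArg Prod.fst this).symm
    show a * _ = z
    show (a.1 ++ _, _ * _) = z
    refine Prod.ext ?_ ?_
    · show a.1 ++ _ = _
      rw [h1, hw]
    · show (push H ρ (push H ρ ws a.2⁻¹).1 a.2).2 * (_ * z.2) = z.2
      rw [← mul_assoc, mul_inv_cancel, one_mul]

lemma NFc.leftCancel (a b c : NFc H ρ) (h : a * b = a * c) : b = c := by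
  rw [NFc.mul_def, NFc.mul_def] at h; replace h := Prod.ext_iff.mp h
  obtain ⟨h1, h2⟩ := h
  have hl : (push H ρ b.1 a.2).1 = (push H ρ c.1 a.2).1 :=
    List.append_cancel_left h1
  have hb1 : b.1 = c.1 := by
    have := congrArg (fun l => (push H ρ l a.2⁻¹).1) hl
    simpa [push_push_fst] using this
  have : push H ρ b.1 a.2 = push H ρ c.1 a.2 := by rw [hb1]
  rw [this] at h2
  exact Prod.ext hb1 (mul_left_cancel h2)

lemma NFc.isLeftRees : IsLeftReesMonoid (NFc H ρ) := by
  refine ⟨NFc.leftCancel H ρ, ?_, ?_⟩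
  · intro a b ⟨z, hz1, hz2⟩
    rw [NFc.mem_prIdeal] at hz1 hz2
    rcases List.prefix_or_prefix_of_prefix hz1 hz2 with h | h
    · right
      intro w hw
      rw [NFc.mem_prIdeal] at hw ⊢
      exact h.trans hw
    · left
      intro w hw
      rw [NFc.mem_prIdeal] at hw ⊢
      exact h.trans hw
  · intro a
    apply Set.Finite.subset (Set.Finite.image
      (fun n => {z : NFc H ρ | List.take n a.1 <+: z.1}) (Set.finite_Iic a.1.length))
    rintro S ⟨⟨b, rfl⟩, hsub⟩
    have ha : a ∈ prIdeal b := hsub ⟨1, mul_one a⟩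
    rw [NFc.mem_prIdeal] at ha
    refine ⟨b.1.length, Nat.le_of_lt_succ (Nat.lt_succ_of_le ha.length_le), ?_⟩
    have hb : List.take b.1.length a.1 = b.1 := (List.prefix_iff_eq_take.mp ha).symm
    ext z
    rw [Set.mem_setOf_eq, hb, NFc.mem_prIdeal]

def NFc.mk (l : List (Σ i : I, G ⧸ H i)) (g : G) : NFc H ρ := ⟨l, g⟩

@[simp] lemma NFc.mk_fst (l : List (Σ i : I, G ⧸ H i)) (g : G) : (NFc.mk H ρ l g).1 = l := rfl
@[simp] lemma NFc.mk_snd (l : List (Σ i : I, G ⧸ H i)) (g : G) : (NFc.mk H ρ l g).2 = g := rfl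

noncomputable def uu (i : I) : H i :=
  ⟨Quotient.out (QuotientGroup.mk (1 : G) : G ⧸ H i), by
    have := QuotientGroup.out_eq' (QuotientGroup.mk (1 : G) : G ⧸ H i)
    rw [QuotientGroup.eq] at this
    simpa using this⟩

lemma smul_e1 {i : I} (h : G) (hh : h ∈ H i) :
    h • (QuotientGroup.mk (1 : G) : G ⧸ H i) = QuotientGroup.mk (1 : G) := by
  have h2 : h • (QuotientGroup.mk (1 : G) : G ⧸ H i) = QuotientGroup.mk (h * 1) := rfl
  rw [h2, QuotientGroup.eq]
  simpa using inv_mem hh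

lemma hel_e1 (i : I) (h : H i) :
    hel H (h : G) i (QuotientGroup.mk (1 : G)) = (uu H i)⁻¹ * h * uu H i := by
  apply Subtype.ext
  have h2 := smul_e1 H (h : G) h.2
  simp only [hel, h2, uu]
  push_cast
  group

lemma smul_out_e1 {i : I} (c : G ⧸ H i) :
    Quotient.out c • (QuotientGroup.mk (1 : G) : G ⧸ H i) = c := by
  have h2 : Quotient.out c • (QuotientGroup.mk (1 : G) : G ⧸ H i)
      = QuotientGroup.mk (Quotient.out c * 1) := rfl
  rw [h2, mul_one, QuotientGroup.out_eq']

lemma hel_out (i : I) (c : G ⧸ H i) :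
    hel H (Quotient.out c) i (QuotientGroup.mk (1 : G)) = uu H i := by
  apply Subtype.ext
  simp only [hel, smul_out_e1, uu]
  group

def iota : G →* HNNMonoid G H ρ where
  toFun g := (conGen (HNNRel G H ρ)).mk' (FreeMonoid.of (Sum.inl g))
  map_one' := (Con.eq _).mpr (ConGen.Rel.of _ _ HNNRel.one)
  map_mul' g h := by
    rw [← map_mul]
    exact ((Con.eq _).mpr (ConGen.Rel.of _ _ (HNNRel.mul g h))).symm

def tau (i : I) : HNNMonoid G H ρ := (conGen (HNNRel G H ρ)).mk' (FreeMonoid.of (Sum.inr i))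

lemma iota_tau (i : I) (h : H i) :
    iota H ρ (h : G) * tau H ρ i = tau H ρ i * iota H ρ (ρ i h) := by
  show (conGen (HNNRel G H ρ)).mk' _ * (conGen (HNNRel G H ρ)).mk' _
      = (conGen (HNNRel G H ρ)).mk' _ * (conGen (HNNRel G H ρ)).mk' _
  rw [← map_mul, ← map_mul]
  exact (Con.eq _).mpr (ConGen.Rel.of _ _ (HNNRel.hnn i h))

noncomputable def psiList (xs : List (Σ i : I, G ⧸ H i)) : HNNMonoid G H ρ :=
  (xs.map fun p => iota H ρ (Quotient.out p.2) * tau H ρ p.1).prod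

@[simp] lemma psiList_nil : psiList H ρ [] = 1 := rfl

lemma psiList_cons (p : Σ i : I, G ⧸ H i) (xs : List (Σ i : I, G ⧸ H i)) :
    psiList H ρ (p :: xs) = iota H ρ (Quotient.out p.2) * tau H ρ p.1 * psiList H ρ xs := by
  simp [psiList]

lemma psiList_append (xs ys : List (Σ i : I, G ⧸ H i)) :
    psiList H ρ (xs ++ ys) = psiList H ρ xs * psiList H ρ ys := by
  simp [psiList]

lemma intertwine : ∀ (ys : List (Σ i : I, G ⧸ H i)) (g : G),
    iota H ρ g * psiList H ρ ys
      = psiList H ρ (push H ρ ys g).1 * iota H ρ (push H ρ ys g).2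
  | [], g => by simp [push_nil]
  | ⟨i, c⟩ :: ys, g => by
    have e1 : iota H ρ g * iota H ρ (Quotient.out c)
        = iota H ρ (Quotient.out (g • c)) * iota H ρ (hel H g i c) := by
      rw [← map_mul, ← map_mul]
      exact congrArg _ (hel_val H g i c).symm
    calc iota H ρ g * psiList H ρ (⟨i, c⟩ :: ys)
        = (iota H ρ g * iota H ρ (Quotient.out c)) * (tau H ρ i * psiList H ρ ys) := by
          rw [psiList_cons]; simp only [mul_assoc]
      _ = (iota H ρ (Quotient.out (g • c)) * iota H ρ (hel H g i c))
            * (tau H ρ i * psiList H ρ ys) := by rw [e1]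
      _ = iota H ρ (Quotient.out (g • c))
            * ((iota H ρ (hel H g i c) * tau H ρ i) * psiList H ρ ys) := by
          simp only [mul_assoc]
      _ = iota H ρ (Quotient.out (g • c))
            * ((tau H ρ i * iota H ρ (ρ i (hel H g i c))) * psiList H ρ ys) := by
          rw [iota_tau]
      _ = iota H ρ (Quotient.out (g • c))
            * (tau H ρ i * (iota H ρ (ρ i (hel H g i c)) * psiList H ρ ys)) := by
          simp only [mul_assoc]
      _ = iota H ρ (Quotient.out (g • c))
            * (tau H ρ i * (psiList H ρ (push H ρ ys (ρ i (hel H g i c))).1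
                * iota H ρ (push H ρ ys (ρ i (hel H g i c))).2)) := by
          rw [intertwine ys _]
      _ = psiList H ρ (push H ρ (⟨i, c⟩ :: ys) g).1
            * iota H ρ (push H ρ (⟨i, c⟩ :: ys) g).2 := by
          rw [push_cons, psiList_cons]; simp only [mul_assoc]

noncomputable def psi : NFc H ρ →* HNNMonoid G H ρ where
  toFun p := psiList H ρ p.1 * iota H ρ p.2
  map_one' := by
    show psiList H ρ [] * iota H ρ 1 = 1
    simp
  map_mul' a b := by
    show psiList H ρ (a.1 ++ (push H ρ b.1 a.2).1)
        * iota H ρ ((push H ρ b.1 a.2).2 * b.2)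
      = (psiList H ρ a.1 * iota H ρ a.2) * (psiList H ρ b.1 * iota H ρ b.2)
    rw [psiList_append, map_mul]
    calc psiList H ρ a.1 * psiList H ρ (push H ρ b.1 a.2).1
            * (iota H ρ (push H ρ b.1 a.2).2 * iota H ρ b.2)
        = psiList H ρ a.1 * ((psiList H ρ (push H ρ b.1 a.2).1
            * iota H ρ (push H ρ b.1 a.2).2) * iota H ρ b.2) := by
          simp only [mul_assoc]
      _ = psiList H ρ a.1 * ((iota H ρ a.2 * psiList H ρ b.1) * iota H ρ b.2) := by
          rw [← intertwine]
      _ = (psiList H ρ a.1 * iota H ρ a.2) * (psiList H ρ b.1 * iota H ρ b.2) := by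
          simp only [mul_assoc]

noncomputable def fgen : G ⊕ I → NFc H ρ :=
  Sum.elim (fun g => NFc.mk H ρ [] g)
    (fun i => NFc.mk H ρ [⟨i, QuotientGroup.mk 1⟩] (ρ i (uu H i))⁻¹)

noncomputable def phi : HNNMonoid G H ρ →* NFc H ρ :=
  (conGen (HNNRel G H ρ)).lift (FreeMonoid.lift (fgen H ρ)) (Con.conGen_le.mpr (by
    rintro x y (⟨g, h⟩ | ⟨⟩ | ⟨i, h⟩) <;> rw [Con.ker_rel]
    · simp only [map_mul, FreeMonoid.lift_eval_of, fgen, Sum.elim_inl]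
      refine Prod.ext rfl ?_
      show (push H ρ [] g).2 * h = g * h
      rw [push_nil]
    · simp only [FreeMonoid.lift_eval_of, fgen, Sum.elim_inl]
      rfl
    · simp only [map_mul, FreeMonoid.lift_eval_of, fgen, Sum.elim_inl, Sum.elim_inr]
      rw [NFc.mul_def, NFc.mul_def]
      refine Prod.ext ?_ ?_
      · show [] ++ (push H ρ [⟨i, QuotientGroup.mk 1⟩] (h : G)).1
          = [⟨i, QuotientGroup.mk 1⟩] ++ (push H ρ [] (ρ i (uu H i))⁻¹).1
        rw [push_cons, push_nil, push_nil, smul_e1 H (h : G) h.2]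
        simp
      · show (push H ρ [⟨i, QuotientGroup.mk 1⟩] (h : G)).2 * (ρ i (uu H i))⁻¹
          = (push H ρ [] (ρ i (uu H i))⁻¹).2 * (ρ i h)
        rw [push_cons, push_nil, push_nil, hel_e1]
        simp only [map_mul, map_inv]
        group))

lemma phi_iota (g : G) : phi H ρ (iota H ρ g) = NFc.mk H ρ [] g := by
  show phi H ρ ((conGen (HNNRel G H ρ)).mk' (FreeMonoid.of (Sum.inl g))) = _
  rw [phi, Con.lift_mk', FreeMonoid.lift_eval_of]
  rfl

lemma phi_tau (i : I) :
    phi H ρ (tau H ρ i) = NFc.mk H ρ [⟨i, QuotientGroup.mk 1⟩] (ρ i (uu H i))⁻¹ := by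
  show phi H ρ ((conGen (HNNRel G H ρ)).mk' (FreeMonoid.of (Sum.inr i))) = _
  rw [phi, Con.lift_mk', FreeMonoid.lift_eval_of]
  rfl

lemma psi_phi (m : HNNMonoid G H ρ) : psi H ρ (phi H ρ m) = m := by
  have key : ((psi H ρ).comp (phi H ρ)).comp (conGen (HNNRel G H ρ)).mk'
      = (conGen (HNNRel G H ρ)).mk' := by
    refine FreeMonoid.hom_eq fun x => ?_
    cases x with
    | inl g =>
      show psi H ρ (phi H ρ (iota H ρ g)) = (conGen (HNNRel G H ρ)).mk' _
      rw [phi_iota]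
      show psiList H ρ [] * iota H ρ g = (conGen (HNNRel G H ρ)).mk' _
      rw [psiList_nil, one_mul]
      rfl
    | inr i =>
      show psi H ρ (phi H ρ (tau H ρ i)) = (conGen (HNNRel G H ρ)).mk' _
      rw [phi_tau]
      show psiList H ρ [⟨i, QuotientGroup.mk 1⟩] * iota H ρ (ρ i (uu H i))⁻¹
        = (conGen (HNNRel G H ρ)).mk' _
      rw [psiList_cons, psiList_nil, mul_one]
      dsimp only
      have hval : iota H ρ (Quotient.out (QuotientGroup.mk (1:G) : G ⧸ H i))
          = iota H ρ ((uu H i : G)) := rfl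
      rw [hval, iota_tau, mul_assoc, ← map_mul, mul_inv_cancel, map_one, mul_one]
      rfl
  induction m using Con.induction_on with
  | H w => exact DFunLike.congr_fun key w

lemma phi_single (i : I) (c : G ⧸ H i) :
    phi H ρ (iota H ρ (Quotient.out c) * tau H ρ i) = NFc.mk H ρ [⟨i, c⟩] 1 := by
  rw [map_mul, phi_iota, phi_tau, NFc.mul_def]
  refine Prod.ext ?_ ?_
  · show [] ++ (push H ρ [⟨i, QuotientGroup.mk 1⟩] (Quotient.out c)).1 = [⟨i, c⟩]
    rw [push_cons, push_nil, smul_out_e1]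
    rfl
  · show (push H ρ [⟨i, QuotientGroup.mk 1⟩] (Quotient.out c)).2 * (ρ i (uu H i))⁻¹ = 1
    rw [push_cons, push_nil, hel_out]
    simp

lemma phi_psiList : ∀ xs : List (Σ i : I, G ⧸ H i),
    phi H ρ (psiList H ρ xs) = NFc.mk H ρ xs 1
  | [] => by rw [psiList_nil, map_one]; rfl
  | ⟨i, c⟩ :: xs => by
    rw [psiList_cons, map_mul, map_mul, phi_iota, phi_tau]
    have : phi H ρ (psiList H ρ xs) = NFc.mk H ρ xs 1 := phi_psiList xs
    rw [this]
    have hsing := phi_single H ρ i c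
    rw [map_mul, phi_iota, phi_tau] at hsing
    rw [hsing, NFc.mul_def]
    refine Prod.ext ?_ ?_
    · show [⟨i, c⟩] ++ (push H ρ xs (1:G)).1 = ⟨i, c⟩ :: xs
      rw [push_one]
      rfl
    · show (push H ρ xs (1:G)).2 * 1 = 1
      rw [push_one, mul_one]

lemma phi_psi (p : NFc H ρ) : phi H ρ (psi H ρ p) = p := by
  show phi H ρ (psiList H ρ p.1 * iota H ρ p.2) = p
  rw [map_mul, phi_psiList, phi_iota, NFc.mul_def]
  refine Prod.ext ?_ ?_
  · show p.1 ++ (push H ρ ([] : List (Σ i : I, G ⧸ H i)) (1:G)).1 = p.1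
    rw [push_nil]
    simp
  · show (push H ρ ([] : List (Σ i : I, G ⧸ H i)) (1:G)).2 * p.2 = p.2
    rw [push_nil, one_mul]

noncomputable def nfEquiv : HNNMonoid G H ρ ≃* NFc H ρ :=
  { toFun := phi H ρ, invFun := psi H ρ, left_inv := psi_phi H ρ,
    right_inv := phi_psi H ρ, map_mul' := map_mul (phi H ρ) }

end NF

lemma isLeftRees_of_mulEquiv {M : Type*} {N : Type*} [Monoid M] [Monoid N] (e : M ≃* N)
    (hn : IsLeftReesMonoid N) : IsLeftReesMonoid M := by
  have him : ∀ a : M, ⇑e '' prIdeal a = prIdeal (e a) := by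
    intro a; ext n
    constructor
    · rintro ⟨m, ⟨x, rfl⟩, rfl⟩
      exact ⟨e x, (map_mul e a x).symm⟩
    · rintro ⟨y, rfl⟩
      exact ⟨a * e.symm y, ⟨e.symm y, rfl⟩, by rw [map_mul, MulEquiv.apply_symm_apply]⟩
  obtain ⟨hc, hr, hf⟩ := hn
  refine ⟨?_, ?_, ?_⟩
  · intro a b c h
    exact e.injective (hc (e a) (e b) (e c) (by rw [← map_mul, ← map_mul, h]))
  · intro a b ⟨z, hza, hzb⟩
    have := hr (e a) (e b) ⟨e z,
      (him a) ▸ ⟨z, hza, rfl⟩, (him b) ▸ ⟨z, hzb, rfl⟩⟩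
    rcases this with h | h
    · left; intro x hx
      have hmem : e x ∈ prIdeal (e b) := h ((him a) ▸ ⟨x, hx, rfl⟩)
      rw [← him] at hmem
      obtain ⟨y, hy, hey⟩ := hmem
      rwa [← e.injective hey]
    · right; intro x hx
      have hmem : e x ∈ prIdeal (e a) := h ((him b) ▸ ⟨x, hx, rfl⟩)
      rw [← him] at hmem
      obtain ⟨y, hy, hey⟩ := hmem
      rwa [← e.injective hey]
  · intro a
    apply Set.Finite.of_finite_image (f := fun S => ⇑e '' S)
    · apply Set.Finite.subset (hf (e a))
      rintro T ⟨S, ⟨⟨b, rfl⟩, hsub⟩, rfl⟩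
      refine ⟨⟨e b, by simpa using him b⟩, ?_⟩
      rw [← him a]
      exact Set.image_mono hsub
    · intro S _ T _ h
      exact (Set.image_injective.mpr e.injective) h


/-- every monoid HNN-extension of a group (with subgroups as associated
submonoids) is a left Rees monoid. -/
theorem stmt7 (G : Type u) [Group G] {I : Type v} (H : I → Subgroup G)
    (ρ : ∀ i, H i →* G) : IsLeftReesMonoid (HNNMonoid G H ρ) :=
  isLeftRees_of_mulEquiv (nfEquiv H ρ) (NFc.isLeftRees H ρ)
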